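/- arXiv:2405.15535 — 3 statements merged into one kernel-verified Lean document; each statement's English description precedes it below -/
import Mathlib

section
/- The susceptible population is never fully depleted in the base SEIR model: for any nonnegative solution with S(0) > 0 and S(0) + E(0) + I(0) + R(0) = N, one has S(t) ≥ S(0) · exp(−β₀ τ_I) > 0 for all t ≥ 0. -/
/-- The susceptible population is never fully depleted in the base SEIR
model: `S(t) ≥ S(0) · exp(−β₀ τ_I) > 0` for all `t ≥ 0`. -/
theorem seir_S_never_depleted
    (β₀ τE τI N : ℝ) (hβ₀ : 0 < β₀) (hτE : 0 < τE) (hτI : 0 < τI) (hN : 0 < N)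
    (S E I R : ℝ → ℝ)
    (hS : ∀ t ≥ (0:ℝ), HasDerivAt S (-(β₀ * S t * I t / N)) t)
    (hE : ∀ t ≥ (0:ℝ), HasDerivAt E (β₀ * S t * I t / N - E t / τE) t)
    (hI : ∀ t ≥ (0:ℝ), HasDerivAt I (E t / τE - I t / τI) t)
    (hR : ∀ t ≥ (0:ℝ), HasDerivAt R (I t / τI) t)
    (hnonneg : ∀ t ≥ (0:ℝ), 0 ≤ S t ∧ 0 ≤ E t ∧ 0 ≤ I t ∧ 0 ≤ R t)
    (hS0 : 0 < S 0) (hsum : S 0 + E 0 + I 0 + R 0 = N) :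
    (∀ t ≥ (0:ℝ), S 0 * Real.exp (-(β₀ * τI)) ≤ S t) ∧
      0 < S 0 * Real.exp (-(β₀ * τI)) := by
  have hNe : N ≠ 0 := hN.ne'
  have hτIe : τI ≠ 0 := hτI.ne'
  set c : ℝ := β₀ * τI / N with hc
  have hcpos : 0 ≤ c := by positivity
  -- sum is constant
  have hsumderiv : ∀ x ≥ (0:ℝ), HasDerivAt (fun y => S y + E y + I y + R y) 0 x := by
    intro x hx0
    have h : HasDerivAt (fun y => S y + E y + I y + R y) _ x := (((hS x hx0).add (hE x hx0)).add (hI x hx0)).add (hR x hx0)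
    convert h using 1
    ring
  have hsumconst : ∀ t ≥ (0:ℝ), S t + E t + I t + R t = N := by
    intro t ht
    have key := constant_of_has_deriv_right_zero
      (f := fun y => S y + E y + I y + R y) (a := 0) (b := t)
      (fun x hx => (hsumderiv x hx.1).continuousAt.continuousWithinAt)
      (fun x hx => (hsumderiv x hx.1).hasDerivWithinAt)
    have := key t ⟨ht, le_rfl⟩
    simpa [hsum] using this
  -- G(t) = S(t) * exp(c * R(t)) is constant
  have hGderiv : ∀ x ≥ (0:ℝ), HasDerivAt (fun y => S y * Real.exp (c * R y)) 0 x := by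
    intro x hx0
    have hexp := ((hR x hx0).const_mul c).exp
    have h : HasDerivAt (fun y => S y * Real.exp (c * R y)) _ x := (hS x hx0).mul hexp
    convert h using 1
    rw [hc]
    field_simp
    ring
  have hGconst : ∀ t ≥ (0:ℝ), S t * Real.exp (c * R t) = S 0 * Real.exp (c * R 0) := by
    intro t ht
    have key := constant_of_has_deriv_right_zero
      (f := fun y => S y * Real.exp (c * R y)) (a := 0) (b := t)
      (fun x hx => (hGderiv x hx.1).continuousAt.continuousWithinAt)
      (fun x hx => (hGderiv x hx.1).hasDerivWithinAt)
    exact key t ⟨ht, le_rfl⟩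
  have hpos : 0 < S 0 * Real.exp (-(β₀ * τI)) := by positivity
  refine ⟨fun t ht => ?_, hpos⟩
  -- R t ≤ N and 0 ≤ R 0
  have hRt_le : R t ≤ N := by
    have h := hsumconst t ht
    have hn := hnonneg t ht
    linarith [hn.1, hn.2.1, hn.2.2.1]
  have hR0 : 0 ≤ R 0 := (hnonneg 0 le_rfl).2.2.2
  -- S t = S 0 * exp (c * (R 0 - R t))
  have hSt : S t = S 0 * Real.exp (c * (R 0 - R t)) := by
    have h := hGconst t ht
    have hexpne : Real.exp (c * R t) ≠ 0 := (Real.exp_pos _).ne'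
    have : S t = S 0 * Real.exp (c * R 0) / Real.exp (c * R t) :=
      eq_div_of_mul_eq hexpne h
    rw [this, mul_div_assoc, ← Real.exp_sub]
    ring_nf
  rw [hSt]
  have harg : -(β₀ * τI) ≤ c * (R 0 - R t) := by
    have h1 : -N ≤ R 0 - R t := by linarith
    have h2 : c * (-N) ≤ c * (R 0 - R t) := mul_le_mul_of_nonneg_left h1 hcpos
    have : c * (-N) = -(β₀ * τI) := by rw [hc]; field_simp
    linarith
  exact mul_le_mul_of_nonneg_left (Real.exp_le_exp.mpr harg) hS0.le
end

section
/- Subthreshold condition implies no outbreak in the base SEIR model: for any nonnegative solution, if β₀ τ_I S(0) ≤ N (i.e., the initial effective reproduction number β₀ τ_I S(0)/N is at most one), then the total infected population t ↦ E(t) + I(t) is nonincreasing on [0, ∞). -/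
/-- Subthreshold condition implies no outbreak: if `β₀ τ_I S(0) ≤ N`,
then `t ↦ E(t) + I(t)` is nonincreasing on `[0, ∞)`, along any nonnegative solution. -/
theorem seir_subthreshold_no_outbreak
    (β₀ τE τI N : ℝ) (hβ₀ : 0 < β₀) (hτE : 0 < τE) (hτI : 0 < τI) (hN : 0 < N)
    (S E I R : ℝ → ℝ)
    (hS : ∀ t ≥ (0:ℝ), HasDerivAt S (-(β₀ * S t * I t / N)) t)
    (hE : ∀ t ≥ (0:ℝ), HasDerivAt E (β₀ * S t * I t / N - E t / τE) t)
    (hI : ∀ t ≥ (0:ℝ), HasDerivAt I (E t / τE - I t / τI) t)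
    (hR : ∀ t ≥ (0:ℝ), HasDerivAt R (I t / τI) t)
    (hnonneg : ∀ t ≥ (0:ℝ), 0 ≤ S t ∧ 0 ≤ E t ∧ 0 ≤ I t ∧ 0 ≤ R t)
    (hthreshold : β₀ * τI * S 0 ≤ N) :
    AntitoneOn (fun t => E t + I t) (Set.Ici (0:ℝ)) := by
  -- S is antitone on [0, ∞)
  have hSanti : AntitoneOn S (Set.Ici (0:ℝ)) := by
    apply antitoneOn_of_deriv_nonpos (convex_Ici 0)
    · intro t ht
      exact (hS t ht).continuousAt.continuousWithinAt
    · intro t ht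
      rw [interior_Ici] at ht
      exact (hS t ht.le).differentiableAt.differentiableWithinAt
    · intro t ht
      rw [interior_Ici] at ht
      rw [(hS t ht.le).deriv]
      obtain ⟨hS0, _, hI0, _⟩ := hnonneg t ht.le
      have : 0 ≤ β₀ * S t * I t / N := by positivity
      linarith
  apply antitoneOn_of_deriv_nonpos (convex_Ici 0)
  · intro t ht
    exact ((hE t ht).add (hI t ht)).continuousAt.continuousWithinAt
  · intro t ht
    rw [interior_Ici] at ht
    exact ((hE t ht.le).add (hI t ht.le)).differentiableAt.differentiableWithinAt
  · intro t ht
    rw [interior_Ici] at ht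
    have hd : HasDerivAt (fun t => E t + I t) (β₀ * S t * I t / N - I t / τI) t := by
      have := (hE t ht.le).add (hI t ht.le)
      refine this.congr_deriv ?_
      ring
    rw [hd.deriv]
    obtain ⟨hS0, _, hI0, _⟩ := hnonneg t ht.le
    have hSle : S t ≤ S 0 := hSanti (Set.self_mem_Ici) (Set.mem_Ici.mpr (le_of_lt ht)) ht.le
    have h1 : β₀ * S t * I t ≤ β₀ * S 0 * I t := by
      nlinarith [mul_le_mul_of_nonneg_right hSle (mul_nonneg hβ₀.le hI0)]
    have h2 : β₀ * S 0 * I t * τI ≤ N * I t := by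
      nlinarith [mul_le_mul_of_nonneg_right hthreshold hI0]
    rw [div_sub_div _ _ (ne_of_gt hN) (ne_of_gt hτI), div_nonpos_iff]
    right
    constructor
    · nlinarith [mul_le_mul_of_nonneg_right h1 hτI.le]
    · positivity
end

section
/- The disease dies out in the base SEIR model (the system stabilizes without an infectious population): for any nonnegative solution with S(0) + E(0) + I(0) + R(0) = N, one has I(t) → 0 and E(t) → 0 as t → ∞. -/
open Set intervalIntegral

lemma barbalat (f d : ℝ → ℝ) (C B : ℝ) (hC : 0 < C)
    (hf : ∀ t ≥ (0:ℝ), HasDerivAt f (d t) t)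
    (hd : ∀ t ≥ (0:ℝ), d t ≤ C)
    (hpos : ∀ t ≥ (0:ℝ), 0 ≤ f t)
    (hB : ∀ T ≥ (0:ℝ), ∫ t in (0:ℝ)..T, f t ≤ B) :
    Filter.Tendsto f Filter.atTop (nhds 0) := by
  have hcont : ContinuousOn f (Ici 0) := fun t ht => (hf t ht).continuousAt.continuousWithinAt
  have hInt : ∀ a b : ℝ, 0 ≤ a → 0 ≤ b → IntervalIntegrable f MeasureTheory.volume a b := by
    intro a b ha hb
    exact (hcont.mono (fun x hx => le_trans (le_min ha hb) hx.1)).intervalIntegrable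
  set G : ℝ → ℝ := fun T => ∫ t in (0:ℝ)..(max T 0), f t with hG
  have hGdiff : ∀ s t : ℝ, s ≤ t → G t = G s + ∫ u in (max s 0)..(max t 0), f u := by
    intro s t hst
    have := integral_add_adjacent_intervals (hInt 0 (max s 0) le_rfl (le_max_right _ _))
      (hInt (max s 0) (max t 0) (le_max_right _ _) (le_max_right _ _))
    simp only [hG]; linarith [this]
  have hmono : Monotone G := by
    intro s t hst
    rw [hGdiff s t hst]
    have h1 : (0:ℝ) ≤ ∫ u in (max s 0)..(max t 0), f u := by
      apply integral_nonneg (max_le_max hst le_rfl)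
      intro u hu
      exact hpos u (le_trans (le_max_right s 0) hu.1)
    linarith
  have hbdd : BddAbove (Set.range G) := by
    refine ⟨B, ?_⟩
    rintro x ⟨T, rfl⟩
    exact hB (max T 0) (le_max_right _ _)
  have hGtend : Filter.Tendsto G Filter.atTop (nhds (⨆ T, G T)) :=
    tendsto_atTop_ciSup hmono hbdd
  set L := ⨆ T, G T with hL
  have hGle : ∀ t, G t ≤ L := fun t => le_ciSup hbdd t
  rw [Metric.tendsto_atTop]
  intro ε hε
  set δ := ε / (2 * C) with hδ
  have hδpos : 0 < δ := by positivity
  have hε' : 0 < ε * δ / 2 := by positivity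
  obtain ⟨T₁, hT₁⟩ := (Metric.tendsto_atTop.1 hGtend) (ε * δ / 2) hε'
  refine ⟨max T₁ 0 + δ, fun t ht => ?_⟩
  have ht0 : (0:ℝ) ≤ t := le_trans (by positivity) (le_trans (le_add_of_nonneg_left (le_max_right T₁ 0)) ht)
  have htδ : max T₁ 0 ≤ t - δ := by linarith
  have htδ0 : (0:ℝ) ≤ t - δ := le_trans (le_max_right _ _) htδ
  by_contra hcon
  push_neg at hcon
  have hfe : ε ≤ f t := by
    rw [Real.dist_eq, sub_zero, abs_of_nonneg (hpos t ht0)] at hcon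
    exact hcon
  -- g := C x - f x is monotone on Ici 0
  have hgmono : MonotoneOn (fun x => C * x - f x) (Ici 0) := by
    apply monotoneOn_of_deriv_nonneg (convex_Ici 0)
    · exact (continuous_const.mul continuous_id).continuousOn.sub hcont
    · intro x hx
      rw [interior_Ici] at hx
      exact (((hasDerivAt_id x).const_mul C).sub (hf x (le_of_lt hx))).differentiableAt.differentiableWithinAt
    · intro x hx
      rw [interior_Ici] at hx
      have hdx : HasDerivAt (fun x => C * x - f x) (C * 1 - d x) x :=
        ((hasDerivAt_id x).const_mul C).sub (hf x (le_of_lt hx))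
      rw [hdx.deriv]
      have := hd x (le_of_lt hx)
      linarith
  have hlow : ∀ s ∈ Icc (t - δ) t, ε / 2 ≤ f s := by
    intro s hs
    have hs0 : (0:ℝ) ≤ s := le_trans htδ0 hs.1
    have := hgmono hs0 ht0 hs.2
    simp only at this
    have hCδ : C * δ = ε / 2 := by field_simp [hδ]; rw [hδ]; field_simp
    nlinarith [hs.1, hs.2]
  have hint_lower : ε * δ / 2 ≤ ∫ u in (t - δ)..t, f u := by
    have : ∫ u in (t - δ)..t, (ε/2 : ℝ) ≤ ∫ u in (t - δ)..t, f u := by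
      apply integral_mono_on (by linarith) (intervalIntegrable_const) (hInt _ _ htδ0 ht0)
      intro x hx; exact hlow x hx
    rw [integral_const] at this
    simp only [smul_eq_mul] at this
    nlinarith
  have hGt : G t - G (t - δ) = ∫ u in (t-δ)..t, f u := by
    rw [hGdiff (t - δ) t (by linarith)]
    rw [max_eq_left htδ0, max_eq_left ht0]
    ring
  have h1 : dist (G (t-δ)) L < ε * δ / 2 := hT₁ _ (le_trans (le_max_left T₁ 0) htδ)
  rw [Real.dist_eq, abs_sub_lt_iff] at h1
  have h2 := hGle t
  linarith [hint_lower, hGt, h1.2]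

/-- The disease dies out in the base SEIR model: along any nonnegative
solution with total population `N`, `I(t) → 0` and `E(t) → 0` as `t → ∞`. -/
theorem seir_disease_dies_out
    (β₀ τE τI N : ℝ) (hβ₀ : 0 < β₀) (hτE : 0 < τE) (hτI : 0 < τI) (hN : 0 < N)
    (S E I R : ℝ → ℝ)
    (hS : ∀ t ≥ (0:ℝ), HasDerivAt S (-(β₀ * S t * I t / N)) t)
    (hE : ∀ t ≥ (0:ℝ), HasDerivAt E (β₀ * S t * I t / N - E t / τE) t)
    (hI : ∀ t ≥ (0:ℝ), HasDerivAt I (E t / τE - I t / τI) t)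
    (hR : ∀ t ≥ (0:ℝ), HasDerivAt R (I t / τI) t)
    (hnonneg : ∀ t ≥ (0:ℝ), 0 ≤ S t ∧ 0 ≤ E t ∧ 0 ≤ I t ∧ 0 ≤ R t)
    (hsum : S 0 + E 0 + I 0 + R 0 = N) :
    Filter.Tendsto I Filter.atTop (nhds 0) ∧ Filter.Tendsto E Filter.atTop (nhds 0) := by

  -- total population is constant
  have hTot : ∀ t ≥ (0:ℝ), HasDerivAt (fun u => S u + E u + I u + R u) 0 t := by
    intro t ht
    have h := (((hS t ht).add (hE t ht)).add (hI t ht)).add (hR t ht)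
    exact h.congr_deriv (by ring)
  have hmemIcc : ∀ (T : ℝ), 0 ≤ T → ∀ t ∈ uIcc (0:ℝ) T, (0:ℝ) ≤ t := by
    intro T hT t htm
    have := htm.1
    simpa [min_eq_left hT] using this
  have hconst : ∀ T ≥ (0:ℝ), S T + E T + I T + R T = N := by
    intro T hT
    have h := integral_eq_sub_of_hasDerivAt (f := fun u => S u + E u + I u + R u)
      (f' := fun _ => (0:ℝ)) (a := 0) (b := T)
      (fun t htm => hTot t (hmemIcc T hT t htm)) intervalIntegrable_const
    simp at h
    linarith
  have hSle : ∀ t ≥ (0:ℝ), S t ≤ N := by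
    intro t ht; obtain ⟨h1, h2, h3, h4⟩ := hnonneg t ht; have := hconst t ht; linarith
  have hEle : ∀ t ≥ (0:ℝ), E t ≤ N := by
    intro t ht; obtain ⟨h1, h2, h3, h4⟩ := hnonneg t ht; have := hconst t ht; linarith
  have hIle : ∀ t ≥ (0:ℝ), I t ≤ N := by
    intro t ht; obtain ⟨h1, h2, h3, h4⟩ := hnonneg t ht; have := hconst t ht; linarith
  have hIcont : ContinuousOn I (Ici 0) := fun t ht => (hI t ht).continuousAt.continuousWithinAt
  have hEcont : ContinuousOn E (Ici 0) := fun t ht => (hE t ht).continuousAt.continuousWithinAt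
  constructor
  · -- I → 0 via P = S + E + I
    apply barbalat I (fun t => E t / τE - I t / τI) (N / τE) (τI * N) (by positivity) hI
    · intro t ht
      obtain ⟨h1, h2, h3, h4⟩ := hnonneg t ht
      have := hEle t ht
      have hIτ : 0 ≤ I t / τI := by positivity
      have : E t / τE ≤ N / τE := by gcongr
      linarith
    · intro t ht; exact (hnonneg t ht).2.2.1
    · intro T hT
      have hP : ∀ t ≥ (0:ℝ), HasDerivAt (fun u => S u + E u + I u) (-(I t / τI)) t := by
        intro t ht
        have h := ((hS t ht).add (hE t ht)).add (hI t ht)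
        exact h.congr_deriv (by ring)
      have hint : IntervalIntegrable (fun t => -(I t / τI)) MeasureTheory.volume 0 T := by
        apply ContinuousOn.intervalIntegrable
        apply ContinuousOn.neg
        apply ContinuousOn.div_const
        exact hIcont.mono (fun x hx => hmemIcc T hT x hx)
      have h := integral_eq_sub_of_hasDerivAt (f := fun u => S u + E u + I u)
        (f' := fun t => -(I t / τI)) (a := 0) (b := T)
        (fun t htm => hP t (hmemIcc T hT t htm)) hint
      have heq : ∫ t in (0:ℝ)..T, -(I t / τI) = -(1/τI) * ∫ t in (0:ℝ)..T, I t := by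
        rw [← integral_const_mul]
        congr 1; ext t; ring
      rw [heq] at h
      obtain ⟨h1, h2, h3, h4⟩ := hnonneg T hT
      obtain ⟨g1, g2, g3, g4⟩ := hnonneg 0 le_rfl
      have hP0 : S 0 + E 0 + I 0 ≤ N := by linarith
      have hJ : ∫ t in (0:ℝ)..T, I t = τI * (S 0 + E 0 + I 0 - (S T + E T + I T)) := by
        have hτI' : τI ≠ 0 := ne_of_gt hτI
        field_simp at h
        nlinarith [h]
      rw [hJ]
      nlinarith [hτI, hP0, h1, h2, h3]
  · -- E → 0 via Q = S + E
    apply barbalat E (fun t => β₀ * S t * I t / N - E t / τE) (β₀ * N) (τE * N) (by positivity) hE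
    · intro t ht
      obtain ⟨h1, h2, h3, h4⟩ := hnonneg t ht
      have hSN := hSle t ht
      have hIN := hIle t ht
      have hEτ : 0 ≤ E t / τE := by positivity
      have : β₀ * S t * I t / N ≤ β₀ * N := by
        rw [div_le_iff₀ hN]
        nlinarith [mul_le_mul_of_nonneg_left (mul_le_mul hSN hIN h3 hN.le) hβ₀.le]
      linarith
    · intro t ht; exact (hnonneg t ht).2.1
    · intro T hT
      have hQ : ∀ t ≥ (0:ℝ), HasDerivAt (fun u => S u + E u) (-(E t / τE)) t := by
        intro t ht
        have h := (hS t ht).add (hE t ht)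
        exact h.congr_deriv (by ring)
      have hint : IntervalIntegrable (fun t => -(E t / τE)) MeasureTheory.volume 0 T := by
        apply ContinuousOn.intervalIntegrable
        apply ContinuousOn.neg
        apply ContinuousOn.div_const
        exact hEcont.mono (fun x hx => hmemIcc T hT x hx)
      have h := integral_eq_sub_of_hasDerivAt (f := fun u => S u + E u)
        (f' := fun t => -(E t / τE)) (a := 0) (b := T)
        (fun t htm => hQ t (hmemIcc T hT t htm)) hint
      have heq : ∫ t in (0:ℝ)..T, -(E t / τE) = -(1/τE) * ∫ t in (0:ℝ)..T, E t := by
        rw [← integral_const_mul]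
        congr 1; ext t; ring
      rw [heq] at h
      obtain ⟨h1, h2, h3, h4⟩ := hnonneg T hT
      obtain ⟨g1, g2, g3, g4⟩ := hnonneg 0 le_rfl
      have hQ0 : S 0 + E 0 ≤ N := by linarith
      have hJ : ∫ t in (0:ℝ)..T, E t = τE * (S 0 + E 0 - (S T + E T)) := by
        have hτE' : τE ≠ 0 := ne_of_gt hτE
        field_simp at h
        nlinarith [h]
      rw [hJ]
      nlinarith [hτE, hQ0, h1, h2]
end
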